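/- If ℓ(v) is contained in ℓ(u) (i.e., ℓ(v) is the nested label of some descendant of u in possibly another network), then v is equivalent to some descendant of u; moreover, ℓ(v) is an element of the multiset ℓ(u) if and only if ℓ(v) is the nested label of some child of u. -/

import Mathlib

open scoped Classical

/-- A finite directed acyclic graph whose leaves are (injectively) labeled in `S`. -/
structure LDag (S : Type) : Type 1 where
  V : Type
  fin : Fintype V
  adj : V → V → Prop
  acyclic : WellFounded (fun a b => adj b a)
  lab : V → S
  labInj : ∀ u v : V, (∀ w, ¬ adj u w) → (∀ w, ¬ adj v w) → lab u = lab v → u = v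

attribute [instance] LDag.fin

namespace LDag

variable {S : Type}

/-- A leaf is a node with no children. -/
def IsLeaf (N : LDag S) (v : N.V) : Prop := ∀ w, ¬ N.adj v w

/-- `v` is a descendant of `u` (every node is a descendant of itself). -/
def Desc (N : LDag S) (u v : N.V) : Prop := Relation.ReflTransGen N.adj u v

/-- The cluster of `u`: the set of labels of the leaves that are descendants of `u`. -/
def cluster (N : LDag S) (u : N.V) : Set S :=
  {s | ∃ v, N.Desc u v ∧ N.IsLeaf v ∧ N.lab v = s}

/-- A tree node: a node with at most one parent. -/
def TreeNode (N : LDag S) (v : N.V) : Prop :=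
  ∀ p q, N.adj p v → N.adj q v → p = q

/-- A root: a node with no parents. -/
def IsRoot (N : LDag S) (r : N.V) : Prop := ∀ u, ¬ N.adj u r

/-- Tree-child: every internal node has a child that is a tree node. -/
def TreeChild (N : LDag S) : Prop :=
  ∀ v, ¬ N.IsLeaf v → ∃ w, N.adj v w ∧ N.TreeNode w

/-- `PathN N u v k`: there is a directed path of length `k` from `u` to `v`. -/
inductive PathN (N : LDag S) : N.V → N.V → ℕ → Prop
  | refl (v : N.V) : PathN N v v 0
  | cons {u v w : N.V} {k : ℕ} : N.adj u v → PathN N v w k → PathN N u w (k + 1)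

/-- The height of a node: the largest length of a directed path from it to a leaf. -/
noncomputable def height (N : LDag S) (v : N.V) : ℕ :=
  sSup {k | ∃ s, N.IsLeaf s ∧ PathN N v s k}

/-- Node equivalence between (possibly equal) labeled DAGs, defined recursively:
two leaves with the same label are equivalent, and two internal nodes are equivalent
when their children can be matched into equivalent pairs. -/
noncomputable def equivTo (N1 N2 : LDag S) : N1.V → N2.V → Prop :=
  N1.acyclic.fix (fun u ih v =>
    (N1.IsLeaf u ∧ N2.IsLeaf v ∧ N1.lab u = N2.lab v) ∨
    (¬ N1.IsLeaf u ∧ ¬ N2.IsLeaf v ∧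
      ∃ f : {w // N1.adj u w} ≃ {w // N2.adj v w},
        ∀ w : {w // N1.adj u w}, ih w.1 w.2 (f w).1))

end LDag

/-- Pre-nested labels: finitely branching trees of labels (multisets are obtained
as a quotient by `NEq` below). -/
inductive PreNested (S : Type) : Type
  | leaf : S → PreNested S
  | node : List (PreNested S) → PreNested S

/-- Equality of pre-nested labels as nested multisets. -/
inductive NEq {S : Type} : PreNested S → PreNested S → Prop
  | leaf (a : S) : NEq (.leaf a) (.leaf a)
  | node {l m : List (PreNested S)} : List.Forall₂ NEq l m → NEq (.node l) (.node m)
  | perm {l m : List (PreNested S)} : l.Perm m → NEq (.node l) (.node m)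
  | symm {a b : PreNested S} : NEq a b → NEq b a
  | trans {a b c : PreNested S} : NEq a b → NEq b c → NEq a c

mutual
  theorem NEq.refl {S : Type} : ∀ a : PreNested S, NEq a a
    | .leaf s => .leaf s
    | .node l => .node (NEq.reflL l)
  theorem NEq.reflL {S : Type} : ∀ l : List (PreNested S), List.Forall₂ NEq l l
    | [] => .nil
    | a :: l => .cons (NEq.refl a) (NEq.reflL l)
end

instance PreNested.setoid (S : Type) : Setoid (PreNested S) :=
  ⟨NEq, ⟨NEq.refl, fun h => h.symm, fun h1 h2 => h1.trans h2⟩⟩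

/-- Nested multisets (of multisets of ...) of labels. -/
def Nested (S : Type) : Type := Quotient (PreNested.setoid S)

/-- `TaxaIn s p`: the taxon `s` occurs somewhere (at any nesting depth) in `p`. -/
inductive TaxaIn {S : Type} : S → PreNested S → Prop
  | leaf (s : S) : TaxaIn s (.leaf s)
  | node {s : S} {p : PreNested S} {l : List (PreNested S)} :
      p ∈ l → TaxaIn s p → TaxaIn s (.node l)

mutual
  /-- Nesting depth of a pre-nested label: a singleton `{s}` has depth 1. -/
  def depthP {S : Type} : PreNested S → ℕ
    | .leaf _ => 1
    | .node l => depthL l + 1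
  def depthL {S : Type} : List (PreNested S) → ℕ
    | [] => 0
    | p :: ps => max (depthP p) (depthL ps)
end

namespace LDag

variable {S : Type}

/-- The nested label of a node: the singleton of its label for a leaf, and the
multiset of the nested labels of its children otherwise. -/
noncomputable def nested (N : LDag S) : N.V → Nested S :=
  N.acyclic.fix (fun v ih =>
    if h : N.IsLeaf v then (⟦PreNested.leaf (N.lab v)⟧ : Nested S)
    else ⟦PreNested.node (((Finset.univ.filter (fun w => N.adj v w)).attach.toList).map
        (fun w => (ih w.1 (Finset.mem_filter.mp w.2).2).out))⟧)

/-- `Υ(N)`: the multiset of equivalence classes (= nested labels) of the nodes of `N`,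
with multiplicities. -/
noncomputable def UpsilonM (N : LDag S) : Multiset (Nested S) :=
  Finset.univ.val.map N.nested

/-- Label-preserving isomorphisms of labeled DAGs. -/
structure Iso (N1 N2 : LDag S) where
  toEquiv : N1.V ≃ N2.V
  adj_iff : ∀ u v : N1.V, N2.adj (toEquiv u) (toEquiv v) ↔ N1.adj u v
  lab_leaf : ∀ v : N1.V, N1.IsLeaf v → N2.lab (toEquiv v) = N1.lab v

def IsIso (N1 N2 : LDag S) : Prop := Nonempty (Iso N1 N2)

theorem Iso.leaf_map {N1 N2 : LDag S} (e : Iso N1 N2) {v : N1.V} (h : N1.IsLeaf v) :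
    N2.IsLeaf (e.toEquiv v) := by
  intro w hw
  have hw' : N2.adj (e.toEquiv v) (e.toEquiv (e.toEquiv.symm w)) := by simpa using hw
  exact h _ ((e.adj_iff _ _).mp hw')

def Iso.refl (N : LDag S) : Iso N N :=
  ⟨Equiv.refl _, fun _ _ => Iff.rfl, fun _ _ => rfl⟩

def Iso.symm {N1 N2 : LDag S} (e : Iso N1 N2) : Iso N2 N1 where
  toEquiv := e.toEquiv.symm
  adj_iff u v := by rw [← e.adj_iff]; simp
  lab_leaf v hv := by
    have h1 : N1.IsLeaf (e.toEquiv.symm v) := by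
      intro w hw
      have : N2.adj v (e.toEquiv w) := by
        have := (e.adj_iff (e.toEquiv.symm v) w).mpr hw
        simpa using this
      exact hv _ this
    have := e.lab_leaf _ h1
    simpa using this.symm

def Iso.trans {N1 N2 N3 : LDag S} (e : Iso N1 N2) (f : Iso N2 N3) : Iso N1 N3 where
  toEquiv := e.toEquiv.trans f.toEquiv
  adj_iff u v := by
    simp only [Equiv.trans_apply]
    rw [f.adj_iff, e.adj_iff]
  lab_leaf v hv := by
    simp only [Equiv.trans_apply]
    rw [f.lab_leaf _ (e.leaf_map hv), e.lab_leaf _ hv]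

instance isoSetoid (S : Type) : Setoid (LDag S) :=
  ⟨IsIso, ⟨fun N => ⟨Iso.refl N⟩, fun ⟨e⟩ => ⟨e.symm⟩, fun ⟨e⟩ ⟨f⟩ => ⟨e.trans f⟩⟩⟩

/-- Isomorphism classes of labeled DAGs. -/
def IsoClass (S : Type) : Type 1 := Quotient (isoSetoid S)

/-- The rooted subnetwork `N(u)` generated by a node `u`: the induced subgraph on
the set of descendants of `u`. -/
noncomputable def subnet (N : LDag S) (u : N.V) : LDag S where
  V := {v // N.Desc u v}
  fin := Subtype.fintype _
  adj a b := N.adj a.1 b.1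
  acyclic := by
    have h : (fun (a b : {v // N.Desc u v}) => N.adj b.1 a.1) =
        InvImage (fun a b => N.adj b a) Subtype.val := rfl
    rw [h]
    exact InvImage.wf _ N.acyclic
  lab v := N.lab v.1
  labInj := by
    intro a b ha hb hlab
    apply Subtype.ext
    refine N.labInj a.1 b.1 ?_ ?_ hlab
    · intro w hw
      exact ha ⟨w, a.2.trans (Relation.ReflTransGen.single hw)⟩ hw
    · intro w hw
      exact hb ⟨w, b.2.trans (Relation.ReflTransGen.single hw)⟩ hw

/-- `Σ(N)`: the multiset of isomorphism classes of the rooted subnetworks generated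
by the nodes of `N`, with multiplicities. -/
noncomputable def SigmaM (N : LDag S) : Multiset (IsoClass S) :=
  Finset.univ.val.map (fun u => (Quotient.mk (isoSetoid S) (N.subnet u) : IsoClass S))

/-- Nakhleh's dissimilarity `m(N1,N2) = |Υ(N1) △ Υ(N2)| / 2`. -/
noncomputable def mDist (N1 N2 : LDag S) : ℝ :=
  (((N1.UpsilonM - N2.UpsilonM) + (N2.UpsilonM - N1.UpsilonM)).card : ℝ) / 2

/-- The distance `σ(N1,N2) = |Σ(N1) △ Σ(N2)| / 2`. -/
noncomputable def sigmaDist (N1 N2 : LDag S) : ℝ :=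
  (((N1.SigmaM - N2.SigmaM) + (N2.SigmaM - N1.SigmaM)).card : ℝ) / 2

end LDag

/-- An `S`-DAG: a labeled DAG whose leaves are bijectively labeled by `S`. -/
structure SDag (S : Type) extends LDag S where
  surjLab : ∀ s : S, ∃ v, toLDag.IsLeaf v ∧ toLDag.lab v = s

/-- A phylogenetic network on `S`: a rooted `S`-DAG. -/
structure PhyloNetwork (S : Type) extends SDag S where
  rooted : ∃! r, toLDag.IsRoot r

section AuxiliaryLemmas

open scoped Classical

variable {S : Type}

private theorem forall2_map_eq {l m : List (PreNested S)} (h : List.Forall₂ NEq l m) :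
    l.map (Quotient.mk (PreNested.setoid S)) = m.map (Quotient.mk (PreNested.setoid S)) := by
  induction h with
  | nil => rfl
  | cons h _ ih => simp only [List.map_cons, ih, Quotient.sound (s := PreNested.setoid _) h]

private theorem neq_structure : ∀ {a b : PreNested S}, NEq a b →
    (∃ s, a = .leaf s ∧ b = .leaf s) ∨
    (∃ l m, a = .node l ∧ b = .node m ∧
      ((l.map (Quotient.mk (PreNested.setoid S)) : List (Nested S)) : Multiset (Nested S)) =
        ((m.map (Quotient.mk (PreNested.setoid S)) : List (Nested S)) : Multiset (Nested S))) := by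
  intro a b h
  induction h using NEq.rec
    (motive_2 := fun l m _ =>
      l.map (Quotient.mk (PreNested.setoid S)) = m.map (Quotient.mk (PreNested.setoid S))) with
  | leaf s => exact .inl ⟨s, rfl, rfl⟩
  | node _ ih => exact .inr ⟨_, _, rfl, rfl, congrArg (fun x : List (Nested S) => (x : Multiset (Nested S))) ih⟩
  | perm hp => exact .inr ⟨_, _, rfl, rfl, Multiset.coe_eq_coe.mpr (hp.map _)⟩
  | symm _ ih =>
      rcases ih with ⟨s, h1, h2⟩ | ⟨l, m, h1, h2, h3⟩
      · exact .inl ⟨s, h2, h1⟩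
      · exact .inr ⟨m, l, h2, h1, h3.symm⟩
  | trans _ _ ih1 ih2 =>
      rcases ih1 with ⟨s, ha, hb⟩ | ⟨l, m, ha, hb, hc⟩ <;>
        rcases ih2 with ⟨t, hd, he⟩ | ⟨l', m', hd, he, hf⟩
      · subst ha; cases hb.symm.trans hd; exact .inl ⟨s, rfl, he⟩
      · subst hb; exact absurd hd (by simp)
      · subst hb; exact absurd hd (by simp)
      · subst ha; subst he; cases hb.symm.trans hd
        exact .inr ⟨l, m', rfl, rfl, hc.trans hf⟩
  | nil => rfl
  | cons h1 _ _ ih2 =>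
      simp only [List.map_cons, ih2, List.cons.injEq, and_true]
      exact Quotient.sound (s := PreNested.setoid S) h1

private theorem leaf_inj {s t : S}
    (h : (⟦PreNested.leaf s⟧ : Nested S) = ⟦PreNested.leaf t⟧) : s = t := by
  rcases neq_structure (Quotient.exact h) with ⟨a, h1, h2⟩ | ⟨l, m, h1, _, _⟩
  · cases h1; cases h2; rfl
  · exact absurd h1 (by simp)

private theorem leaf_ne_node (s : S) (l : List (PreNested S)) :
    (⟦PreNested.leaf s⟧ : Nested S) ≠ ⟦PreNested.node l⟧ := by
  intro h
  rcases neq_structure (Quotient.exact h) with ⟨a, _, h2⟩ | ⟨l', m, h1, _, _⟩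
  · exact absurd h2 (by simp)
  · exact absurd h1 (by simp)

private theorem node_inj {l m : List (PreNested S)}
    (h : (⟦PreNested.node l⟧ : Nested S) = ⟦PreNested.node m⟧) :
    ((l.map (Quotient.mk (PreNested.setoid S)) : List (Nested S)) : Multiset (Nested S)) =
      ((m.map (Quotient.mk (PreNested.setoid S)) : List (Nested S)) : Multiset (Nested S)) := by
  rcases neq_structure (Quotient.exact h) with ⟨a, h1, _⟩ | ⟨l', m', h1, h2, h3⟩
  · exact absurd h1 (by simp)
  · cases h1; cases h2; exact h3

namespace LDag

private theorem nested_def (N : LDag S) (v : N.V) :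
    N.nested v = if h : N.IsLeaf v then (⟦PreNested.leaf (N.lab v)⟧ : Nested S)
    else ⟦PreNested.node (((Finset.univ.filter (fun w => N.adj v w)).attach.toList).map
        (fun w => (N.nested w.1).out))⟧ :=
  WellFounded.fix_eq _ _ v

private theorem equivTo_def (N1 N2 : LDag S) (u : N1.V) (v : N2.V) :
    N1.equivTo N2 u v ↔
    ((N1.IsLeaf u ∧ N2.IsLeaf v ∧ N1.lab u = N2.lab v) ∨
    (¬ N1.IsLeaf u ∧ ¬ N2.IsLeaf v ∧
      ∃ f : {w // N1.adj u w} ≃ {w // N2.adj v w},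
        ∀ w : {w // N1.adj u w}, N1.equivTo N2 w.1 (f w).1)) :=
  by rw [equivTo, WellFounded.fix_eq]

private theorem childList_map (N : LDag S) (v : N.V) :
    (((((Finset.univ.filter (fun w => N.adj v w)).attach.toList).map
        (fun w => (N.nested w.1).out)).map (Quotient.mk (PreNested.setoid S)) :
        List (Nested S)) : Multiset (Nested S))
      = (Finset.univ.val.filter (fun w => N.adj v w)).map N.nested := by
  erw [List.map_map]
  have h1 : ((Quotient.mk (PreNested.setoid S)) ∘
      (fun w : {x // x ∈ Finset.univ.filter (fun w => N.adj v w)} => (N.nested w.1).out))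
      = fun w : {x // x ∈ Finset.univ.filter (fun w => N.adj v w)} => N.nested w.1 :=
    funext fun w => (N.nested w.1).out_eq
  erw [h1]
  show Multiset.map (fun w : {x // x ∈ Finset.univ.filter (fun w => N.adj v w)} => N.nested w.1)
      (((Finset.univ.filter (fun w => N.adj v w)).attach.toList : List _) : Multiset _) = _
  rw [Finset.coe_toList, Finset.attach_val]
  show Multiset.map
      (fun w : {x // x ∈ (Finset.univ.filter (fun w => N.adj v w)).val} => N.nested w.1)
      (Finset.univ.filter (fun w => N.adj v w)).val.attach = _
  rw [Multiset.attach_map_val', Finset.filter_val]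

end LDag

private theorem exists_forall2 {α β γ : Type} (f : α → γ) (g : β → γ) :
    ∀ (l1 : List α) (l2 : List β), (l1.map f).Perm (l2.map g) →
    ∃ l2', l2.Perm l2' ∧ List.Forall₂ (fun a b => f a = g b) l1 l2' := by
  intro l1
  induction l1 with
  | nil =>
      intro l2 h
      have : l2.map g = [] := (h.symm.eq_nil)
      rw [List.map_eq_nil_iff] at this
      subst this
      exact ⟨[], List.Perm.refl _, List.Forall₂.nil⟩
  | cons a l1 ih =>
      intro l2 h
      have hmem : f a ∈ l2.map g := h.mem_iff.mp (by simp)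
      obtain ⟨b, hb, hgb⟩ := List.mem_map.mp hmem
      have hp : l2.Perm (b :: l2.erase b) := List.perm_cons_erase hb
      have h2 : (f a :: l1.map f).Perm (g b :: (l2.erase b).map g) := by
        simpa using h.trans (hp.map g)
      rw [hgb] at h2
      obtain ⟨l2'', hperm'', hf''⟩ := ih (l2.erase b) h2.cons_inv
      exact ⟨b :: l2'', hp.trans (hperm''.cons b),
        List.Forall₂.cons hgb.symm hf''⟩

private theorem exists_equiv_of_map_eq {α β γ : Type} [Fintype α] [Fintype β]
    (f : α → γ) (g : β → γ)
    (h : Finset.univ.val.map f = Finset.univ.val.map g) :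
    ∃ e : α ≃ β, ∀ a, f a = g (e a) := by
  classical
  have h' : ((Finset.univ : Finset α).toList.map f).Perm
      ((Finset.univ : Finset β).toList.map g) := by
    apply Multiset.coe_eq_coe.mp
    show Multiset.map f ((Finset.univ : Finset α).toList : Multiset α)
        = Multiset.map g ((Finset.univ : Finset β).toList : Multiset β)
    rw [Finset.coe_toList, Finset.coe_toList]
    exact h
  obtain ⟨l2', hperm, hf⟩ := exists_forall2 f g _ _ h'
  have nd1 : (Finset.univ : Finset α).toList.Nodup := Finset.nodup_toList _
  have nd2 : l2'.Nodup := hperm.nodup_iff.mp (Finset.nodup_toList _)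
  have mem1 : ∀ a : α, a ∈ (Finset.univ : Finset α).toList := fun a =>
    Finset.mem_toList.mpr (Finset.mem_univ a)
  have mem2 : ∀ b : β, b ∈ l2' := fun b =>
    hperm.mem_iff.mp (Finset.mem_toList.mpr (Finset.mem_univ b))
  let e1 := List.Nodup.getEquivOfForallMemList _ nd1 mem1
  let e2 := List.Nodup.getEquivOfForallMemList _ nd2 mem2
  have hlen := hf.length_eq
  obtain ⟨-, hget⟩ := List.forall₂_iff_get.mp hf
  refine ⟨e1.symm.trans ((finCongr hlen).trans e2), fun a => ?_⟩
  have ha : (Finset.univ : Finset α).toList.get (e1.symm a) = a := e1.apply_symm_apply a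
  have := hget (e1.symm a).1 (e1.symm a).2 (hlen ▸ (e1.symm a).2)
  rw [ha] at this
  exact this

namespace LDag

private theorem univ_val_map_subtype {α γ : Type} [Fintype α] (p : α → Prop) (F : α → γ) :
    ((Finset.univ : Finset {x // p x}).val.map (fun x => F x.1))
      = (Finset.univ.val.filter p).map F := by
  classical
  let e0 : {x // x ∈ Finset.univ.filter p} ≃ {x // p x} :=
    ⟨fun x => ⟨x.1, (Finset.mem_filter.mp x.2).2⟩,
     fun x => ⟨x.1, Finset.mem_filter.mpr ⟨Finset.mem_univ _, x.2⟩⟩,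
     fun x => rfl, fun x => rfl⟩
  have h1 : (Finset.univ : Finset {x // p x}) = Finset.univ.map e0.toEmbedding :=
    (Finset.map_univ_equiv e0).symm
  rw [h1, Finset.map_val, Multiset.map_map]
  rw [Finset.univ_eq_attach, Finset.attach_val]
  show Multiset.map (fun x : {x // x ∈ (Finset.univ.filter p).val} => F x.1)
      (Finset.univ.filter p).val.attach = _
  rw [Multiset.attach_map_val', Finset.filter_val]

/-- Children multisets of nested labels agree when nested labels agree. -/
private theorem nested_children_eq {N1 N2 : LDag S} {u : N1.V} {v : N2.V}
    (hu : ¬ N1.IsLeaf u) (hv : ¬ N2.IsLeaf v) (h : N1.nested u = N2.nested v) :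
    ((Finset.univ : Finset {w // N1.adj u w}).val.map (fun x => N1.nested x.1))
      = ((Finset.univ : Finset {w // N2.adj v w}).val.map (fun x => N2.nested x.1)) := by
  rw [nested_def, dif_neg hu, nested_def, dif_neg hv] at h
  have := node_inj h
  rw [childList_map, childList_map] at this
  rw [univ_val_map_subtype, univ_val_map_subtype]
  exact this

private theorem equivTo_of_nested_eq (N1 N2 : LDag S) (u : N1.V) :
    ∀ v : N2.V, N1.nested u = N2.nested v → N1.equivTo N2 u v := by
  induction u using WellFounded.induction N1.acyclic with
  | _ u ih =>
  intro v hnv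
  rw [equivTo_def]
  by_cases hu : N1.IsLeaf u
  · by_cases hv : N2.IsLeaf v
    · rw [nested_def, dif_pos hu, nested_def, dif_pos hv] at hnv
      exact .inl ⟨hu, hv, leaf_inj hnv⟩
    · rw [nested_def, dif_pos hu, nested_def, dif_neg hv] at hnv
      exact absurd hnv (leaf_ne_node _ _)
  · by_cases hv : N2.IsLeaf v
    · rw [nested_def, dif_neg hu, nested_def, dif_pos hv] at hnv
      exact absurd hnv.symm (leaf_ne_node _ _)
    · refine .inr ⟨hu, hv, ?_⟩
      obtain ⟨e, he⟩ := exists_equiv_of_map_eq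
        (fun x : {w // N1.adj u w} => N1.nested x.1)
        (fun x : {w // N2.adj v w} => N2.nested x.1)
        (nested_children_eq hu hv hnv)
      exact ⟨e, fun w => ih w.1 w.2 (e w).1 (he w)⟩

end LDag

end AuxiliaryLemmas

/-- If the nested label of `v` is contained in the nested label of `u` (it is the
nested label of some descendant of `u`), then `v` is equivalent to some descendant of
`u`; moreover `ℓ(v)` is an element of the multiset `ℓ(u)` iff `ℓ(v)` is the nested
label of some child of `u`. -/
theorem nested_containment {S : Type} (N1 N2 : SDag S) (u : N1.V) (v : N2.V) :
    ((∃ w, N1.toLDag.Desc u w ∧ N1.toLDag.nested w = N2.toLDag.nested v) →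
      ∃ w, N1.toLDag.Desc u w ∧ N1.toLDag.equivTo N2.toLDag w v) ∧
    ((∃ (p : PreNested S) (l : List (PreNested S)),
        N1.toLDag.nested u = Quotient.mk (PreNested.setoid S) (PreNested.node l) ∧
        p ∈ l ∧ Quotient.mk (PreNested.setoid S) p = N2.toLDag.nested v) ↔
      ∃ w, N1.adj u w ∧ N1.toLDag.nested w = N2.toLDag.nested v) := by
  constructor
  · rintro ⟨w, hd, he⟩
    exact ⟨w, hd, LDag.equivTo_of_nested_eq _ _ w v he⟩
  · constructor
    · rintro ⟨p, l, hul, hpl, hpv⟩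
      have hu : ¬ N1.toLDag.IsLeaf u := by
        intro h
        rw [LDag.nested_def, dif_pos h] at hul
        exact leaf_ne_node _ _ hul
      rw [LDag.nested_def, dif_neg hu] at hul
      have h2 := node_inj hul
      rw [LDag.childList_map] at h2
      have hmem : (⟦p⟧ : Nested S) ∈
          (Finset.univ.val.filter (fun w => N1.toLDag.adj u w)).map N1.toLDag.nested := by
        rw [h2]
        exact Multiset.mem_coe.mpr (List.mem_map_of_mem hpl)
      obtain ⟨c, hc, hcn⟩ := Multiset.mem_map.mp hmem
      exact ⟨c, (Multiset.mem_filter.mp hc).2, hcn.trans hpv⟩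
    · rintro ⟨w, hw, hnw⟩
      have hu : ¬ N1.toLDag.IsLeaf u := fun h => h w hw
      refine ⟨(N1.toLDag.nested w).out,
        ((Finset.univ.filter (fun x => N1.toLDag.adj u x)).attach.toList).map
          (fun x => (N1.toLDag.nested x.1).out), ?_, ?_, ?_⟩
      · rw [LDag.nested_def, dif_neg hu]
      · have hmem : (⟨w, Finset.mem_filter.mpr ⟨Finset.mem_univ _, hw⟩⟩ :
            {x // x ∈ Finset.univ.filter (fun x => N1.toLDag.adj u x)}) ∈
            (Finset.univ.filter (fun x => N1.toLDag.adj u x)).attach.toList :=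
          Finset.mem_toList.mpr (Finset.mem_attach _ _)
        exact List.mem_map_of_mem hmem
      · rw [(N1.toLDag.nested w).out_eq]
        exact hnw
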